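/- If γ is a permutation of a finite trace β that preserves the dependency partial order →β (i.e., whenever π →β φ, the image of π precedes the image of φ in γ), then for each process p, the subsequence of γ at process p equals the subsequence of β at process p. -/

import Mathlib

structure Event where
  proc : ℕ

theorem reordering_preserves_per_process_subsequences
    (n : ℕ) (β : List Event) (hβ : β.length = n)
    (σ : Equiv.Perm (Fin n))
    (γ : List Event)
    (hγ : γ = List.ofFn (fun j : Fin n => β.get (hβ ▸ σ.symm j)))
    (horder : ∀ i j : Fin n, i < j →
      (β.get (hβ ▸ i)).proc = (β.get (hβ ▸ j)).proc → σ i < σ j) :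
    ∀ p : ℕ, γ.filter (fun e => e.proc == p) = β.filter (fun e => e.proc == p) := by
  subst hβ
  subst hγ
  intro p
  set f : Fin β.length → Event := β.get with hf
  set q : Fin β.length → Bool := fun i => (f i).proc == p with hq
  have hβeq : β = List.ofFn f := (List.ofFn_get β).symm
  set L1 : List (Fin β.length) := (List.finRange β.length).filter q with hL1
  set L2 : List (Fin β.length) := (List.finRange β.length).filter (fun j => q (σ.symm j))
    with hL2
  have hγfil : (List.ofFn (fun j => f (σ.symm j))).filter (fun e => e.proc == p)
      = (L2.map σ.symm).map f := by
    rw [List.ofFn_eq_map, List.filter_map, List.map_map]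
    rfl
  have hβfil : β.filter (fun e => e.proc == p) = L1.map f := by
    conv_lhs => rw [hβeq]
    rw [List.ofFn_eq_map, List.filter_map]
    rfl
  rw [hγfil, hβfil]
  congr 1
  -- L2.map σ.symm = L1
  haveI : IsAntisymm (Fin β.length) (· < ·) :=
    ⟨fun a b h1 h2 => absurd h1 (not_lt.2 h2.le)⟩
  refine (fun hp h1 h2 => List.Perm.eq_of_pairwise' (r := (· < ·)) h1 h2 hp) ?_ ?_ ?_
  · refine (List.perm_ext_iff_of_nodup ?_ ?_).2 ?_
    · exact (((List.nodup_finRange _).filter _).map σ.symm.injective)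
    · exact (List.nodup_finRange _).filter _
    · intro i
      simp only [List.mem_map, hL2, hL1, List.mem_filter, List.mem_finRange, true_and]
      constructor
      · rintro ⟨j, hj, rfl⟩; exact hj
      · intro hi; exact ⟨σ i, by simpa using hi, by simp⟩
  · rw [List.pairwise_map]
    have : L2.Pairwise (· < ·) := (List.pairwise_lt_finRange _).filter _
    refine this.imp_of_mem ?_
    intro a b ha hb hab
    have ha' : q (σ.symm a) = true := (List.mem_filter.1 ha).2
    have hb' : q (σ.symm b) = true := (List.mem_filter.1 hb).2
    have hproc : (f (σ.symm a)).proc = (f (σ.symm b)).proc := by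
      simp only [hq, beq_iff_eq] at ha' hb'
      rw [ha', hb']
    rcases lt_trichotomy (σ.symm a) (σ.symm b) with h | h | h
    · exact h
    · exact absurd (σ.symm.injective h) (ne_of_lt hab)
    · exfalso
      have := horder _ _ h hproc.symm
      simp only [Equiv.apply_symm_apply] at this
      exact absurd hab (not_lt.2 this.le)
  · exact (List.pairwise_lt_finRange _).filter _
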